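/- Let p, q be twice continuously differentiable real functions on an interval (a,b) and let f be a solution of f'' + p·f' + q·f = 0 on (a,b) (so f is four times differentiable). Then for all x in (a,b), w(f)(x) = (p'(x)·f'(x) + q'(x)·f(x))²·f(x) − A(x)·v(f)(x), where A = (p'' − p'·p + 2q')·f' + (−2p'·q + q'' + p·q')·f, or equivalently A = 2p'·f'' + (p'' + p'·p + 2q')·f' + (q'' + p·q')·f. -/
import Mathlib


/-- v h = (deriv h)^2 - (second derivative of h) * h. -/
noncomputable def v (f : ℝ → ℝ) (x : ℝ) : ℝ := (deriv f x) ^ 2 - deriv^[2] f x * f x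

/-- Determinant of the 3x3 Hankel-Wronskian matrix of h (rows of 2nd..4th derivatives). -/
noncomputable def w (f : ℝ → ℝ) (x : ℝ) : ℝ :=
  Matrix.det !![deriv^[2] f x, deriv f x, f x;
    deriv^[3] f x, deriv^[2] f x, deriv f x;
    deriv^[4] f x, deriv^[3] f x, deriv^[2] f x]


theorem stmt_10 (a b : ℝ) (hab : a < b) (p q f : ℝ → ℝ)
    (hp : ContDiffOn ℝ 2 p (Set.Ioo a b)) (hq : ContDiffOn ℝ 2 q (Set.Ioo a b))
    (hf : ContDiffOn ℝ 4 f (Set.Ioo a b))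
    (hode : ∀ x ∈ Set.Ioo a b, deriv^[2] f x + p x * deriv f x + q x * f x = 0) :
    ∀ x ∈ Set.Ioo a b,
      (w f x = (deriv p x * deriv f x + deriv q x * f x) ^ 2 * f x -
        ((deriv^[2] p x - deriv p x * p x + 2 * deriv q x) * deriv f x +
          (-2 * deriv p x * q x + deriv^[2] q x + p x * deriv q x) * f x) * v f x) ∧
      (w f x = (deriv p x * deriv f x + deriv q x * f x) ^ 2 * f x -
        (2 * deriv p x * deriv^[2] f x +
          (deriv^[2] p x + deriv p x * p x + 2 * deriv q x) * deriv f x +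
          (deriv^[2] q x + p x * deriv q x) * f x) * v f x) := by
  set s := Set.Ioo a b with hsdef
  have hs : IsOpen s := isOpen_Ioo
  -- smoothness of derivatives
  have hf1 : ContDiffOn ℝ 3 (deriv f) s := hf.deriv_of_isOpen hs (by norm_num)
  have hf2 : ContDiffOn ℝ 2 (deriv^[2] f) s := by
    have := hf1.deriv_of_isOpen hs (m := 2) (by norm_num)
    simpa [Function.iterate_succ_apply'] using this
  have hp1 : ContDiffOn ℝ 1 (deriv p) s := hp.deriv_of_isOpen hs (by norm_num)
  have hq1 : ContDiffOn ℝ 1 (deriv q) s := hq.deriv_of_isOpen hs (by norm_num)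
  -- differentiability at points of s
  have dF : ∀ y ∈ s, DifferentiableAt ℝ f y := fun y hy =>
    (hf.differentiableOn (by norm_num)).differentiableAt (hs.mem_nhds hy)
  have dF1 : ∀ y ∈ s, DifferentiableAt ℝ (deriv f) y := fun y hy =>
    (hf1.differentiableOn (by norm_num)).differentiableAt (hs.mem_nhds hy)
  have dF2 : ∀ y ∈ s, DifferentiableAt ℝ (deriv^[2] f) y := fun y hy =>
    (hf2.differentiableOn (by norm_num)).differentiableAt (hs.mem_nhds hy)
  have dP : ∀ y ∈ s, DifferentiableAt ℝ p y := fun y hy =>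
    (hp.differentiableOn (by norm_num)).differentiableAt (hs.mem_nhds hy)
  have dQ : ∀ y ∈ s, DifferentiableAt ℝ q y := fun y hy =>
    (hq.differentiableOn (by norm_num)).differentiableAt (hs.mem_nhds hy)
  have dP1 : ∀ y ∈ s, DifferentiableAt ℝ (deriv p) y := fun y hy =>
    (hp1.differentiableOn (by norm_num)).differentiableAt (hs.mem_nhds hy)
  have dQ1 : ∀ y ∈ s, DifferentiableAt ℝ (deriv q) y := fun y hy =>
    (hq1.differentiableOn (by norm_num)).differentiableAt (hs.mem_nhds hy)
  -- second derivative from the ODE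
  have h2 : ∀ y ∈ s, deriv^[2] f y = -(p y * deriv f y + q y * f y) := by
    intro y hy; have := hode y hy; linarith
  -- third derivative
  have h3 : ∀ y ∈ s, deriv^[3] f y =
      -((deriv p y * deriv f y + p y * deriv^[2] f y) +
        (deriv q y * f y + q y * deriv f y)) := by
    intro y hy
    have hstep : deriv^[3] f y = deriv (fun z => -(p z * deriv f z + q z * f z)) y := by
      rw [Function.iterate_succ_apply']
      apply Filter.EventuallyEq.deriv_eq
      filter_upwards [hs.mem_nhds hy] with z hz using h2 z hz
    rw [hstep]
    have hd : HasDerivAt (fun z => -(p z * deriv f z + q z * f z))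
        (-((deriv p y * deriv f y + p y * deriv (deriv f) y) +
          (deriv q y * f y + q y * deriv f y))) y := by
      exact ((((dP y hy).hasDerivAt.mul (dF1 y hy).hasDerivAt).add
        ((dQ y hy).hasDerivAt.mul (dF y hy).hasDerivAt)).neg)
    rw [hd.deriv]
    simp [Function.iterate_succ_apply']
  -- fourth derivative
  have h4 : ∀ y ∈ s, deriv^[4] f y =
      -((deriv^[2] p y * deriv f y + deriv p y * deriv^[2] f y +
          (deriv p y * deriv^[2] f y + p y * deriv^[3] f y)) +
        (deriv^[2] q y * f y + deriv q y * deriv f y +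
          (deriv q y * deriv f y + q y * deriv^[2] f y))) := by
    intro y hy
    have hstep : deriv^[4] f y = deriv (fun z =>
        -((deriv p z * deriv f z + p z * deriv^[2] f z) +
          (deriv q z * f z + q z * deriv f z))) y := by
      rw [Function.iterate_succ_apply']
      apply Filter.EventuallyEq.deriv_eq
      filter_upwards [hs.mem_nhds hy] with z hz using h3 z hz
    rw [hstep]
    have hd : HasDerivAt (fun z =>
        -((deriv p z * deriv f z + p z * deriv^[2] f z) +
          (deriv q z * f z + q z * deriv f z)))
        (-(((deriv (deriv p) y * deriv f y + deriv p y * deriv (deriv f) y) +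
            (deriv p y * deriv^[2] f y + p y * deriv (deriv^[2] f) y)) +
          ((deriv (deriv q) y * f y + deriv q y * deriv f y) +
            (deriv q y * deriv f y + q y * deriv (deriv f) y)))) y := by
      exact ((((dP1 y hy).hasDerivAt.mul (dF1 y hy).hasDerivAt).add
        ((dP y hy).hasDerivAt.mul (dF2 y hy).hasDerivAt)).add
        (((dQ1 y hy).hasDerivAt.mul (dF y hy).hasDerivAt).add
        ((dQ y hy).hasDerivAt.mul (dF1 y hy).hasDerivAt))).neg
    rw [hd.deriv]
    simp [Function.iterate_succ_apply']
  intro x hx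
  have hw : w f x = deriv^[2] f x * deriv^[2] f x * deriv^[2] f x
      - deriv^[2] f x * deriv f x * deriv^[3] f x
      - deriv f x * deriv^[3] f x * deriv^[2] f x
      + deriv f x * deriv f x * deriv^[4] f x
      + f x * deriv^[3] f x * deriv^[3] f x
      - f x * deriv^[2] f x * deriv^[4] f x := by
    simp [w, Matrix.det_fin_three]
  have E2 := h2 x hx
  have E3 := h3 x hx
  have E4 := h4 x hx
  constructor <;>
  · rw [hw]
    simp only [v]
    rw [E4, E3, E2]
    ring
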